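/- Let A be an n×n real symmetric positive definite matrix, let b ∈ ℝ^n, let k ≥ 1, and let K = span{b, Ab, …, A^{k−1}b} be the k-th Krylov subspace of (A, b). Let x ∈ ℝ^n with x ∉ K. Then for every C > 0 there exists an n×n real symmetric positive definite matrix A′ with A′^i b = A^i b for all i = 1, …, k (so A′ has identical Krylov information of cardinality k as A) and ‖A′ x − b‖ > C. That is, for any approximation lying outside the Krylov subspace there is a symmetric positive definite matrix with the same Krylov information whose residual at that approximation is arbitrarily large. -/

import Mathlib

/-- The Euclidean norm on `ℝ^n`. -/
noncomputable def euclNorm {n : ℕ} (v : Fin n → ℝ) : ℝ := Real.sqrt (∑ i, v i ^ 2)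

lemma euclNorm_eq {n : ℕ} (v : EuclideanSpace ℝ (Fin n)) : euclNorm v = ‖v‖ := by
  rw [EuclideanSpace.norm_eq]
  simp [euclNorm, Real.norm_eq_abs, sq_abs]

lemma vecMulVec_mulVec' {n : ℕ} (w v : Fin n → ℝ) :
    (Matrix.vecMulVec w w).mulVec v = (dotProduct w v) • w := by
  ext i
  simp [Matrix.mulVec, dotProduct, Matrix.vecMulVec_apply, Finset.mul_sum,
    mul_assoc, mul_comm, mul_left_comm]

lemma dotProduct_eq_inner {n : ℕ} (w v : EuclideanSpace ℝ (Fin n)) :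
    dotProduct (show Fin n → ℝ from w) (show Fin n → ℝ from v) = (inner ℝ w v : ℝ) := by
  simp [dotProduct, PiLp.inner_apply, RCLike.inner_apply, mul_comm]


lemma aux_posdef {n : ℕ} (A : Matrix (Fin n) (Fin n) ℝ) (hA : A.PosDef)
    (wp : Fin n → ℝ) (t : ℝ) (ht : 0 ≤ t) :
    (A + t • Matrix.vecMulVec wp wp).PosDef := by
  rw [Matrix.posDef_iff_dotProduct_mulVec] at hA ⊢
  constructor
  · have h2 : (t • Matrix.vecMulVec wp wp).IsHermitian := by
      ext i j
      simp [Matrix.conjTranspose_apply, Matrix.vecMulVec_apply, mul_comm]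
    exact hA.1.add h2
  · intro v hv
    have hAv := hA.2 hv
    simp only [star_trivial] at hAv ⊢
    rw [Matrix.add_mulVec, Matrix.smul_mulVec, vecMulVec_mulVec',
      dotProduct_add]
    have h1 : dotProduct v (t • (dotProduct wp v) • wp)
        = t * (dotProduct wp v) ^ 2 := by
      rw [dotProduct_smul, dotProduct_smul, smul_eq_mul, smul_eq_mul,
        dotProduct_comm]
      ring
    rw [h1]
    nlinarith [sq_nonneg (dotProduct wp v)]

/-- **Outside the Krylov subspace the residual can be arbitrarily large.**
Let `A` be symmetric positive definite, `K = span{b, Ab, …, A^{k-1}b}`, and let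
`x ∉ K`.  Then for every `C > 0` there is a symmetric positive definite `A′` with the
same Krylov information of cardinality `k` as `A` (i.e. `A′ⁱ b = Aⁱ b` for
`i = 1, …, k`) and `‖A′ x − b‖ > C`. -/
theorem stmt_7 (n k : ℕ) (hk : 1 ≤ k)
    (A : Matrix (Fin n) (Fin n) ℝ) (hA : A.PosDef) (b x : Fin n → ℝ)
    (hx : x ∉ Submodule.span ℝ (Set.range fun i : Fin k => (A ^ (i : ℕ)).mulVec b)) :
    ∀ C > (0 : ℝ), ∃ A' : Matrix (Fin n) (Fin n) ℝ, A'.PosDef ∧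
      (∀ i : ℕ, 1 ≤ i → i ≤ k → (A' ^ i).mulVec b = (A ^ i).mulVec b) ∧
      C < euclNorm (A'.mulVec x - b) := by
  intro C hC
  -- work in Euclidean space
  set K : Submodule ℝ (EuclideanSpace ℝ (Fin n)) :=
    Submodule.span ℝ (Set.range fun i : Fin k =>
      (WithLp.toLp 2 ((A ^ (i : ℕ)).mulVec b) : EuclideanSpace ℝ (Fin n))) with hK
  have hxK : (WithLp.toLp 2 x : EuclideanSpace ℝ (Fin n)) ∉ K := by
    intro h
    apply hx
    have h2 := Submodule.mem_map_of_mem (f := (WithLp.linearEquiv 2 ℝ (Fin n → ℝ)).toLinearMap) h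
    rw [Submodule.map_span, ← Set.range_comp] at h2
    exact h2
  set p : EuclideanSpace ℝ (Fin n) :=
    (K.orthogonalProjection (WithLp.toLp 2 x : EuclideanSpace ℝ (Fin n)) : EuclideanSpace ℝ (Fin n))
    with hp
  set w : EuclideanSpace ℝ (Fin n) := (WithLp.toLp 2 x : EuclideanSpace ℝ (Fin n)) - p with hwdef
  have hw_orth : w ∈ Kᗮ :=
    by exact K.sub_starProjection_mem_orthogonal (WithLp.toLp 2 x : EuclideanSpace ℝ (Fin n))
  have hp_mem : p ∈ K := (K.orthogonalProjection (WithLp.toLp 2 x : EuclideanSpace ℝ (Fin n))).2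
  have hw_ne : w ≠ 0 := by
    intro h
    rw [hwdef] at h
    exact hxK (sub_eq_zero.mp h ▸ hp_mem)
  have hw_norm : (0:ℝ) < ‖w‖ := norm_pos_iff.mpr hw_ne
  have hw_inner : ∀ v : EuclideanSpace ℝ (Fin n), v ∈ K → (inner ℝ w v : ℝ) = 0 :=
    fun v hv => (Submodule.mem_orthogonal' K w).mp hw_orth v hv
  -- w is orthogonal to all Krylov vectors
  have hdot : ∀ i : ℕ, i < k →
      dotProduct (show Fin n → ℝ from w) ((A ^ i).mulVec b) = 0 := by
    intro i hi
    have hmem : (WithLp.toLp 2 ((A ^ i).mulVec b) : EuclideanSpace ℝ (Fin n)) ∈ K :=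
      Submodule.subset_span ⟨⟨i, hi⟩, rfl⟩
    rw [dotProduct_eq_inner w (WithLp.toLp 2 ((A ^ i).mulVec b) : EuclideanSpace ℝ (Fin n))]
    exact hw_inner _ hmem
  have hwx : dotProduct (show Fin n → ℝ from w) x = ‖w‖ ^ 2 := by
    rw [dotProduct_eq_inner w (WithLp.toLp 2 x : EuclideanSpace ℝ (Fin n))]
    have hsum : w + p = (WithLp.toLp 2 x : EuclideanSpace ℝ (Fin n)) := by
      rw [hwdef]; abel
    calc (inner ℝ w (WithLp.toLp 2 x : EuclideanSpace ℝ (Fin n)) : ℝ)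
        = inner ℝ w (w + p) := by rw [hsum]
      _ = inner ℝ w w + inner ℝ w p := inner_add_right _ _ _
      _ = ‖w‖ ^ 2 := by rw [hw_inner p hp_mem, add_zero, real_inner_self_eq_norm_sq]
  -- the residual and the perturbation size
  set r : EuclideanSpace ℝ (Fin n) := (WithLp.toLp 2 (A.mulVec x - b) : EuclideanSpace ℝ (Fin n)) with hr
  set t : ℝ := (C + ‖r‖ + 1) / ‖w‖ ^ 3 with ht
  have ht_pos : 0 < t := by
    apply div_pos
    · have := norm_nonneg r; linarith
    · positivity
  set wp : Fin n → ℝ := (show Fin n → ℝ from w) with hwp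
  set A' : Matrix (Fin n) (Fin n) ℝ := A + t • Matrix.vecMulVec wp wp with hA'
  have hmul : ∀ v : Fin n → ℝ,
      A'.mulVec v = A.mulVec v + (t * dotProduct wp v) • wp := by
    intro v
    rw [hA', Matrix.add_mulVec, Matrix.smul_mulVec, vecMulVec_mulVec', smul_smul]
  refine ⟨A', ?_, ?_, ?_⟩
  · exact aux_posdef A hA wp t ht_pos.le
  · -- same Krylov information
    have key : ∀ i : ℕ, i ≤ k → (A' ^ i).mulVec b = (A ^ i).mulVec b := by
      intro i hi
      induction i with
      | zero => simp
      | succ m ih =>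
        have hm : m ≤ k := Nat.le_of_succ_le hi
        have hmk : m < k := hi
        rw [pow_succ', pow_succ', ← Matrix.mulVec_mulVec, ← Matrix.mulVec_mulVec,
          ih hm, hmul, hdot m hmk]
        simp
    intro i h1 h2
    exact key i h2
  · -- the residual is large
    have hAx : A'.mulVec x - b = A.mulVec x - b + (t * ‖w‖ ^ 2) • wp := by
      rw [hmul, hwp, hwx]
      abel
    have h2 : euclNorm (A'.mulVec x - b)
        = ‖(r + (t * ‖w‖ ^ 2) • w : EuclideanSpace ℝ (Fin n))‖ := by
      rw [hAx, euclNorm_eq]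
      rfl
    rw [h2]
    have hlow : ‖((t * ‖w‖ ^ 2) • w : EuclideanSpace ℝ (Fin n))‖ - ‖r‖
        ≤ ‖(r + (t * ‖w‖ ^ 2) • w : EuclideanSpace ℝ (Fin n))‖ := by
      have h := norm_sub_norm_le ((t * ‖w‖ ^ 2) • w : EuclideanSpace ℝ (Fin n)) (-r)
      rw [norm_neg, sub_neg_eq_add, add_comm] at h
      linarith
    have hns : ‖((t * ‖w‖ ^ 2) • w : EuclideanSpace ℝ (Fin n))‖ = t * ‖w‖ ^ 3 := by
      rw [norm_smul, Real.norm_eq_abs, abs_of_pos (by positivity)]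
      ring
    have htw : t * ‖w‖ ^ 3 = C + ‖r‖ + 1 := by
      rw [ht]; field_simp
    rw [hns, htw] at hlow
    linarith
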